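/- Let cos(x) = ∑_{j=0}^{m−1} (−1)^j x^{2j}/(2j)! + (−1)^m r_{2m}(x²) x^{2m} define r_{2m} : ℝ≥0 → ℝ. Then r_{2m}(s) ≥ 0 for all s ≥ 0, r_{2m}(0) = 1/(2m)!, and sup_{s≥0} r_{2m}(s) ≤ 1/(2m)!. -/

import Mathlib

open Finset

private noncomputable def Tm (m : ℕ) (x : ℝ) : ℝ :=
  ∑ j ∈ Finset.range m, (-1:ℝ)^j * x^(2*j) / ((2*j).factorial : ℝ)

private noncomputable def Sm (m : ℕ) (x : ℝ) : ℝ :=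
  ∑ j ∈ Finset.range m, (-1:ℝ)^j * x^(2*j+1) / ((2*j+1).factorial : ℝ)

private noncomputable def Gm (m : ℕ) (x : ℝ) : ℝ := (-1:ℝ)^m * (Real.cos x - Tm m x)
private noncomputable def Hm (m : ℕ) (x : ℝ) : ℝ := (-1:ℝ)^m * (Real.sin x - Sm m x)

private lemma hasDerivAt_Sm (m : ℕ) (x : ℝ) :
    HasDerivAt (Sm m) (Tm m x) x := by
  unfold Sm Tm
  apply HasDerivAt.fun_sum
  intro j _
  have h : HasDerivAt (fun y : ℝ => y ^ (2*j+1)) (((2*j+1:ℕ):ℝ) * x^(2*j)) x := by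
    simpa using hasDerivAt_pow (2*j+1) x
  have h2 := (h.const_mul ((-1:ℝ)^j)).div_const (((2*j+1).factorial : ℝ))
  convert h2 using 1
  any_goals rfl
  have hfac : (((2*j+1).factorial : ℝ)) = ((2*j+1:ℕ):ℝ) * (((2*j).factorial : ℝ)) := by
    rw [Nat.factorial_succ]; push_cast; ring
  have h1 : (((2*j).factorial : ℝ)) ≠ 0 := Nat.cast_ne_zero.2 (Nat.factorial_ne_zero _)
  have h3 : ((2*j+1:ℕ):ℝ) ≠ 0 := Nat.cast_ne_zero.2 (by omega)
  rw [hfac]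
  field_simp

private lemma hasDerivAt_Tm (m : ℕ) (x : ℝ) :
    HasDerivAt (Tm (m+1)) (-Sm m x) x := by
  have heq : Tm (m+1) = fun y =>
      (∑ j ∈ Finset.range m, (-1:ℝ)^(j+1) * y^(2*(j+1)) / ((2*(j+1)).factorial : ℝ)) + 1 := by
    funext y
    unfold Tm
    rw [Finset.sum_range_succ']
    simp
  rw [heq]
  have key : HasDerivAt (fun y : ℝ =>
      ∑ j ∈ Finset.range m, (-1:ℝ)^(j+1) * y^(2*(j+1)) / ((2*(j+1)).factorial : ℝ))
      (∑ j ∈ Finset.range m, -((-1:ℝ)^j * x^(2*j+1) / ((2*j+1).factorial : ℝ))) x := by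
    apply HasDerivAt.fun_sum
    intro j _
    have e : 2*(j+1) = (2*j+1)+1 := by omega
    have h : HasDerivAt (fun y : ℝ => y ^ (2*(j+1))) (((2*(j+1):ℕ):ℝ) * x^(2*j+1)) x := by
      rw [e]
      simpa using hasDerivAt_pow ((2*j+1)+1) x
    have h2 := (h.const_mul ((-1:ℝ)^(j+1))).div_const (((2*(j+1)).factorial : ℝ))
    convert h2 using 1
    any_goals rfl
    have hfac : (((2*(j+1)).factorial : ℝ)) = ((2*(j+1):ℕ):ℝ) * (((2*j+1).factorial : ℝ)) := by
      rw [e, Nat.factorial_succ, ← e]; push_cast; ring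
    have h1 : (((2*j+1).factorial : ℝ)) ≠ 0 := Nat.cast_ne_zero.2 (Nat.factorial_ne_zero _)
    have h3 : ((2*(j+1):ℕ):ℝ) ≠ 0 := Nat.cast_ne_zero.2 (by omega)
    rw [hfac, pow_succ]
    field_simp
    ring
  have h4 := key.add_const 1
  convert h4 using 1
  any_goals rfl
  unfold Sm
  rw [← Finset.sum_neg_distrib]

private lemma hasDerivAt_Hm (m : ℕ) (x : ℝ) :
    HasDerivAt (Hm m) (Gm m x) x := by
  unfold Hm Gm
  exact ((Real.hasDerivAt_sin x).sub (hasDerivAt_Sm m x)).const_mul _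

private lemma hasDerivAt_Gm (m : ℕ) (x : ℝ) :
    HasDerivAt (Gm (m+1)) (Hm m x) x := by
  have h := ((Real.hasDerivAt_cos x).sub (hasDerivAt_Tm m x)).const_mul ((-1:ℝ)^(m+1))
  convert h using 1
  any_goals rfl
  unfold Hm
  rw [pow_succ]
  ring

private lemma Hm_zero (m : ℕ) : Hm m 0 = 0 := by
  unfold Hm Sm
  simp

private lemma Gm_zero (k : ℕ) : Gm (k+1) 0 = 0 := by
  unfold Gm Tm
  rw [Finset.sum_range_succ']
  have h : ∀ j : ℕ, (0:ℝ)^(2*(j+1)) = 0 := fun j => zero_pow (by omega)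
  simp [h]

private lemma nonneg_of_deriv {f f' : ℝ → ℝ}
    (hd : ∀ x, HasDerivAt f (f' x) x) (h0 : f 0 = 0)
    (hp : ∀ x, 0 ≤ x → 0 ≤ f' x) : ∀ x, 0 ≤ x → 0 ≤ f x := by
  intro x hx
  have hmono : MonotoneOn f (Set.Ici (0:ℝ)) := by
    apply monotoneOn_of_deriv_nonneg (convex_Ici 0)
    · exact fun y _ => (hd y).continuousAt.continuousWithinAt
    · exact fun y _ => ((hd y).differentiableAt).differentiableWithinAt
    · intro y hy
      rw [(hd y).deriv]
      exact hp y (le_of_lt (by simpa using hy))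
  calc (0:ℝ) = f 0 := h0.symm
    _ ≤ f x := hmono (Set.self_mem_Ici) hx hx

private lemma step_bound {f f' : ℝ → ℝ} {n : ℕ}
    (hd : ∀ x, HasDerivAt f (f' x) x) (h0 : f 0 = 0)
    (hb : ∀ x, 0 ≤ x → 0 ≤ f' x ∧ f' x ≤ x^n / (n.factorial : ℝ)) :
    ∀ x, 0 ≤ x → 0 ≤ f x ∧ f x ≤ x^(n+1) / ((n+1).factorial : ℝ) := by
  intro x hx
  constructor
  · exact nonneg_of_deriv hd h0 (fun y hy => (hb y hy).1) x hx
  · have hfac : (((n+1).factorial : ℝ)) = ((n+1:ℕ):ℝ) * ((n.factorial : ℝ)) := by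
      rw [Nat.factorial_succ]; push_cast; ring
    have hD : ∀ y : ℝ, HasDerivAt (fun z => z^(n+1) / ((n+1).factorial : ℝ) - f z)
        (y^n / (n.factorial : ℝ) - f' y) y := by
      intro y
      have h1 : HasDerivAt (fun z : ℝ => z^(n+1) / ((n+1).factorial : ℝ))
          (y^n / (n.factorial : ℝ)) y := by
        have h0' := (hasDerivAt_pow (n+1) y).div_const (((n+1).factorial : ℝ))
        convert h0' using 1
        any_goals rfl
        have h1 : ((n.factorial : ℝ)) ≠ 0 := Nat.cast_ne_zero.2 (Nat.factorial_ne_zero _)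
        have h3 : ((n+1:ℕ):ℝ) ≠ 0 := Nat.cast_ne_zero.2 (by omega)
        rw [hfac]
        simp only [Nat.add_sub_cancel]
        field_simp
      exact h1.sub (hd y)
    have := nonneg_of_deriv hD (by simp [h0])
      (fun y hy => by have := (hb y hy).2; linarith) x hx
    linarith

private lemma Gm_one (x : ℝ) : Gm 1 x = 1 - Real.cos x := by
  unfold Gm Tm; simp

private lemma key_bounds : ∀ k : ℕ, ∀ x : ℝ, 0 ≤ x →
    (0 ≤ Gm (k+1) x ∧ Gm (k+1) x ≤ x^(2*(k+1)) / ((2*(k+1)).factorial : ℝ)) ∧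
    (0 ≤ Hm (k+1) x ∧ Hm (k+1) x ≤ x^(2*(k+1)+1) / ((2*(k+1)+1).factorial : ℝ)) := by
  intro k
  induction k with
  | zero =>
    have hG : ∀ x : ℝ, 0 ≤ x →
        0 ≤ Gm 1 x ∧ Gm 1 x ≤ x^(2*1) / ((2*1).factorial : ℝ) := by
      intro x _
      rw [Gm_one]
      constructor
      · linarith [Real.cos_le_one x]
      · have := Real.one_sub_sq_div_two_le_cos (x := x)
        norm_num
        linarith
    intro x hx
    refine ⟨hG x hx, ?_⟩
    have := step_bound (f := Hm 1) (f' := Gm 1) (n := 2*1)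
      (fun y => hasDerivAt_Hm 1 y) (Hm_zero 1) hG x hx
    simpa using this
  | succ n ih =>
    have hH : ∀ x : ℝ, 0 ≤ x →
        0 ≤ Hm (n+1) x ∧ Hm (n+1) x ≤ x^(2*(n+1)+1) / ((2*(n+1)+1).factorial : ℝ) :=
      fun x hx => (ih x hx).2
    have hG : ∀ x : ℝ, 0 ≤ x →
        0 ≤ Gm (n+2) x ∧ Gm (n+2) x ≤ x^(2*(n+2)) / ((2*(n+2)).factorial : ℝ) := by
      intro x hx
      have := step_bound (f := Gm (n+2)) (f' := Hm (n+1)) (n := 2*(n+1)+1)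
        (fun y => hasDerivAt_Gm (n+1) y) (Gm_zero (n+1)) hH x hx
      convert this using 3 <;> ring_nf
    intro x hx
    refine ⟨hG x hx, ?_⟩
    have := step_bound (f := Hm (n+2)) (f' := Gm (n+2)) (n := 2*(n+2))
      (fun y => hasDerivAt_Hm (n+2) y) (Hm_zero (n+2)) hG x hx
    convert this using 3

private lemma Gm_succ_eq (m : ℕ) (x : ℝ) :
    Gm (m+1) x = x^(2*m) / ((2*m).factorial : ℝ) - Gm m x := by
  unfold Gm Tm
  rw [Finset.sum_range_succ]
  have ht : ((-1:ℝ)^m) * ((-1:ℝ)^m) = 1 := by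
    rw [← pow_add]; exact Even.neg_one_pow ⟨m, rfl⟩
  rw [pow_succ]
  linear_combination (x^(2*m) / ((2*m).factorial : ℝ)) * ht

theorem cos_taylor_remainder (m : ℕ) (hm : 1 ≤ m) (r : ℝ → ℝ)
    (hrc : ContinuousOn r (Set.Ici 0))
    (hr : ∀ x : ℝ, Real.cos x
      = (∑ j ∈ Finset.range m, (-1:ℝ)^j * x^(2*j) / ((2*j).factorial : ℝ))
        + (-1:ℝ)^m * r (x^2) * x^(2*m)) :
    (∀ s ≥ (0:ℝ), 0 ≤ r s) ∧ r 0 = 1 / ((2*m).factorial : ℝ) ∧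
    (∀ s ≥ (0:ℝ), r s ≤ 1 / ((2*m).factorial : ℝ)) := by
  obtain ⟨k, rfl⟩ : ∃ k, m = k+1 := ⟨m-1, by omega⟩
  set fac : ℝ := ((2*(k+1)).factorial : ℝ) with hfacdef
  set fac2 : ℝ := ((2*(k+2)).factorial : ℝ) with hfac2def
  have hfacpos : 0 < fac := by positivity
  have hfac2pos : 0 < fac2 := by positivity
  have hrel : ∀ x : ℝ, Gm (k+1) x = r (x^2) * x^(2*(k+1)) := by
    intro x
    have ht : ((-1:ℝ)^(k+1)) * ((-1:ℝ)^(k+1)) = 1 := by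
      rw [← pow_add]; exact Even.neg_one_pow ⟨k+1, rfl⟩
    have h2 : Real.cos x - Tm (k+1) x = (-1:ℝ)^(k+1) * r (x^2) * x^(2*(k+1)) := by
      unfold Tm; linarith [hr x]
    unfold Gm
    rw [h2]
    linear_combination (r (x^2) * x^(2*(k+1))) * ht
  -- facts for s > 0
  have hmain : ∀ s : ℝ, 0 < s →
      (0 ≤ r s ∧ r s ≤ 1 / fac ∧ 1 / fac - s / fac2 ≤ r s) := by
    intro s hs
    set x := Real.sqrt s with hxdef
    have hx0 : 0 ≤ x := Real.sqrt_nonneg s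
    have hx2 : x^2 = s := Real.sq_sqrt hs.le
    have hxp : x^(2*(k+1)) = s^(k+1) := by rw [pow_mul, hx2]
    have hxp2 : x^(2*(k+2)) = s^(k+2) := by rw [pow_mul, hx2]
    have hpos : (0:ℝ) < s^(k+1) := pow_pos hs (k+1)
    have hGeq : Gm (k+1) x = r s * s^(k+1) := by
      rw [hrel x, hx2, hxp]
    have hb1 := (key_bounds k x hx0).1
    have hb2 := (key_bounds (k+1) x hx0).1
    refine ⟨?_, ?_, ?_⟩
    · have h := hb1.1
      rw [hGeq] at h
      nlinarith
    · have h := hb1.2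
      rw [hGeq, hxp] at h
      rw [← mul_le_mul_iff_left₀ hpos]
      calc r s * s^(k+1) ≤ s^(k+1) / fac := h
        _ = 1 / fac * s^(k+1) := by ring
    · have h := hb2.2
      have hsucc := Gm_succ_eq (k+1) x
      rw [hGeq, hxp] at hsucc
      have h' : Gm (k+1+1) x ≤ s^(k+2) / fac2 := by
        have e : (2*(k+1+1)) = 2*(k+2) := by ring
        rw [e, hxp2] at h
        exact h
      rw [← mul_le_mul_iff_left₀ hpos]
      have e1 : (1 / fac - s / fac2) * s^(k+1) = s^(k+1) / fac - s^(k+1) * s / fac2 := by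
        ring
      have e2 : s^(k+2) / fac2 = s^(k+1) * s / fac2 := by rw [pow_succ]
      linarith [hsucc, h', e1, e2]
  -- value at 0 by continuity
  have hr0 : r 0 = 1 / fac := by
    have t1 : Filter.Tendsto r (nhdsWithin 0 (Set.Ioi 0)) (nhds (r 0)) := by
      have := (hrc 0 Set.self_mem_Ici)
      exact this.tendsto.mono_left (nhdsWithin_mono 0 Set.Ioi_subset_Ici_self)
    have t2 : Filter.Tendsto r (nhdsWithin 0 (Set.Ioi 0)) (nhds (1 / fac)) := by
      apply tendsto_of_tendsto_of_tendsto_of_le_of_le'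
        (g := fun s : ℝ => 1 / fac - s / fac2) (h := fun _ : ℝ => 1 / fac)
      · have hc : Filter.Tendsto (fun s : ℝ => 1 / fac - s / fac2) (nhds 0)
            (nhds (1 / fac - 0 / fac2)) :=
          (continuous_const.sub (continuous_id.div_const fac2)).tendsto 0
        simpa using hc.mono_left nhdsWithin_le_nhds
      · exact tendsto_const_nhds
      · exact Filter.eventually_of_mem self_mem_nhdsWithin
          (fun s hs => (hmain s hs).2.2)
      · exact Filter.eventually_of_mem self_mem_nhdsWithin
          (fun s hs => (hmain s hs).2.1)
    exact tendsto_nhds_unique t1 t2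
  refine ⟨?_, hr0, ?_⟩
  · intro s hs
    rcases eq_or_lt_of_le hs with h | h
    · rw [← h, hr0]; positivity
    · exact (hmain s h).1
  · intro s hs
    rcases eq_or_lt_of_le hs with h | h
    · rw [← h, hr0]
    · exact (hmain s h).2.1
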